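/- arXiv:2007.07115 — 3 statements merged into one kernel-verified Lean document; each statement's English description precedes it below -/
import Mathlib

section
/- There exists a universal constant C > 0 with the following property. Let S : ℝⁿ → ℝ be measurable with Z := ∫_{ℝⁿ} exp(−S(φ)) dφ finite and positive, let p(φ) := exp(−S(φ))/Z, let q : ℝⁿ → ℝ be a strictly positive probability density with respect to Lebesgue measure, and set w(φ) := p(φ)/q(φ) and C(φ) := S(φ) + ln q(φ). If |w(φ) − 1| ≤ 1/2 for q-almost every φ, then |KL(q‖p) − (1/2)Var_q(C)| ≤ C·E_q[|w − 1|³], where KL(q‖p) = ∫ q(φ) ln(q(φ)/p(φ)) dφ and Var_q(C) is the variance of C(φ) for φ ∼ q. In other words, KL(q‖p) = (1/2)Var_q(C) + O(E_q[|w − 1|³]). -/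
open MeasureTheory
open scoped NNReal ENNReal

/-- Taylor estimate of order 1 for `log (1+u)`. -/
lemma log1p_taylor1 {u : ℝ} (hu : |u| ≤ 1/2) : |Real.log (1 + u) - u| ≤ 2 * u ^ 2 := by
  have hx : |(-u)| < 1 := by rw [abs_neg]; linarith
  have h := Real.abs_log_sub_add_sum_range_le hx 1
  have hsum : (∑ i ∈ Finset.range 1, (-u) ^ (i + 1) / (i + 1)) = -u := by
    simp
  rw [hsum] at h
  have h1 : (1 : ℝ) - -u = 1 + u := by ring
  rw [h1] at h
  have h2 : |(-u) + Real.log (1 + u)| = |Real.log (1 + u) - u| := by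
    congr 1; ring
  rw [h2, abs_neg] at h
  have h3 : |u| ^ (1 + 1) / (1 - |u|) ≤ 2 * u ^ 2 := by
    have h4 : (0:ℝ) < 1 - |u| := by linarith
    rw [div_le_iff₀ h4]
    have h5 : |u| ^ (1+1) = u ^ 2 := by rw [show (1+1) = 2 from rfl, sq_abs]
    rw [h5]
    nlinarith [sq_nonneg u, abs_nonneg u, mul_le_mul_of_nonneg_left hu (sq_nonneg u)]
  linarith

/-- Taylor estimate of order 2 for `log (1+u)`. -/
lemma log1p_taylor2 {u : ℝ} (hu : |u| ≤ 1/2) :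
    |Real.log (1 + u) - u + u ^ 2 / 2| ≤ 2 * |u| ^ 3 := by
  have hx : |(-u)| < 1 := by rw [abs_neg]; linarith
  have h := Real.abs_log_sub_add_sum_range_le hx 2
  have hsum : (∑ i ∈ Finset.range 2, (-u) ^ (i + 1) / (i + 1)) = -u + u ^ 2 / 2 := by
    rw [Finset.sum_range_succ, Finset.sum_range_succ, Finset.sum_range_zero]
    push_cast
    ring
  rw [hsum] at h
  have h1 : (1 : ℝ) - -u = 1 + u := by ring
  rw [h1] at h
  have h2 : |(-u + u ^ 2 / 2) + Real.log (1 + u)| = |Real.log (1 + u) - u + u ^ 2 / 2| := by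
    congr 1; ring
  rw [h2, abs_neg] at h
  have h3 : |u| ^ (2 + 1) / (1 - |u|) ≤ 2 * |u| ^ 3 := by
    have h4 : (0:ℝ) < 1 - |u| := by linarith
    rw [div_le_iff₀ h4]
    have h5 : |u| ^ (2+1) = |u| ^ 3 := by norm_num
    rw [h5]
    nlinarith [abs_nonneg u, pow_nonneg (abs_nonneg u) 3,
      mul_le_mul_of_nonneg_left hu (pow_nonneg (abs_nonneg u) 3)]
  linarith

set_option maxHeartbeats 2000000 in
/-- There is a universal constant `c > 0` such that, whenever the normalized importance
weight `w = p/q` satisfies `|w - 1| ≤ 1/2` q-almost everywhere,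
`|KL(q‖p) - (1/2) Var_q(C)| ≤ c · E_q[|w-1|³]`, where `C = S + ln q`. -/
theorem kl_eq_half_variance_of_C_up_to_third_moment :
    ∃ c : ℝ, 0 < c ∧
      ∀ (n : ℕ) (S : (Fin n → ℝ) → ℝ), Measurable S →
      ∀ (Z : ℝ), Z = ∫ φ : Fin n → ℝ, Real.exp (-S φ) →
      Integrable (fun φ : Fin n → ℝ => Real.exp (-S φ)) →
      0 < Z →
      ∀ (p : (Fin n → ℝ) → ℝ), (∀ φ, p φ = Real.exp (-S φ) / Z) →
      ∀ (q : (Fin n → ℝ) → ℝ), Measurable q → (∀ φ, 0 < q φ) →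
      (∫ φ : Fin n → ℝ, q φ) = 1 →
      ∀ (w : (Fin n → ℝ) → ℝ), (∀ φ, w φ = p φ / q φ) →
      ∀ (Cf : (Fin n → ℝ) → ℝ), (∀ φ, Cf φ = S φ + Real.log (q φ)) →
      (∀ᵐ φ ∂((volume : Measure (Fin n → ℝ)).withDensity
          (fun φ => ENNReal.ofReal (q φ))), |w φ - 1| ≤ 1/2) →
      |(∫ φ : Fin n → ℝ, q φ * Real.log (q φ / p φ))
          - (1/2) * ((∫ φ : Fin n → ℝ, q φ * (Cf φ)^2)
              - (∫ φ : Fin n → ℝ, q φ * Cf φ)^2)|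
        ≤ c * ∫ φ : Fin n → ℝ, q φ * |w φ - 1|^3 := by
  refine ⟨10, by norm_num, ?_⟩
  intro n S hS Z hZ hExpInt hZpos p hp q hq hq0 hq1 w hw Cf hCf hae
  -- basic positivity and measurability
  have hpeq : p = fun φ => Real.exp (-S φ) / Z := funext hp
  have hpm : Measurable p := by rw [hpeq]; exact (hS.neg.exp).div_const Z
  have hweq : w = fun φ => p φ / q φ := funext hw
  have hwm : Measurable w := by rw [hweq]; exact hpm.div hq
  have hp0 : ∀ φ, 0 < p φ := fun φ => by rw [hp]; positivity
  have hw0 : ∀ φ, 0 < w φ := fun φ => by rw [hw]; exact div_pos (hp0 φ) (hq0 φ)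
  obtain ⟨μ, hμdef⟩ : ∃ μ : Measure (Fin n → ℝ), μ = (volume : Measure (Fin n → ℝ)).withDensity
      (fun φ => ENNReal.ofReal (q φ)) := ⟨_, rfl⟩
  rw [← hμdef] at hae
  -- q is integrable
  have hqInt : Integrable q := by
    by_contra h
    rw [integral_undef h] at hq1
    norm_num at hq1
  -- translation between μ-integrals and weighted volume integrals
  have hInt_mu : ∀ g : (Fin n → ℝ) → ℝ, ∫ φ, g φ ∂μ = ∫ φ, q φ * g φ := by
    intro g
    have hq' : Measurable fun φ => (q φ).toNNReal := hq.real_toNNReal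
    have hid : μ = (volume : Measure (Fin n → ℝ)).withDensity
        (fun φ => (((q φ).toNNReal : ℝ≥0) : ℝ≥0∞)) := hμdef
    rw [hid, integral_withDensity_eq_integral_smul hq' g]
    congr 1; funext φ
    simp [NNReal.smul_def, Real.coe_toNNReal _ (hq0 φ).le]
  -- μ is a probability measure
  have hμuniv : μ Set.univ = 1 := by
    rw [hμdef, withDensity_apply _ MeasurableSet.univ, setLIntegral_univ,
      ← ofReal_integral_eq_lintegral_ofReal hqInt
        (Filter.Eventually.of_forall fun φ => (hq0 φ).le), hq1, ENNReal.ofReal_one]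
  haveI : IsProbabilityMeasure μ := ⟨hμuniv⟩
  -- the key functions (introduced opaquely)
  obtain ⟨u, hu⟩ : ∃ u : (Fin n → ℝ) → ℝ, ∀ φ, u φ = w φ - 1 :=
    ⟨fun φ => w φ - 1, fun _ => rfl⟩
  obtain ⟨L, hL⟩ : ∃ L : (Fin n → ℝ) → ℝ, ∀ φ, L φ = Real.log (w φ) :=
    ⟨fun φ => Real.log (w φ), fun _ => rfl⟩
  have hum : Measurable u := by
    have : u = fun φ => w φ - 1 := funext hu
    rw [this]; exact hwm.sub measurable_const
  have hLm : Measurable L := by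
    have : L = fun φ => Real.log (w φ) := funext hL
    rw [this]; exact Real.measurable_log.comp hwm
  have hae' : ∀ᵐ φ ∂μ, |u φ| ≤ 1/2 := by
    filter_upwards [hae] with φ h
    rw [hu φ]; exact h
  have hLu : ∀ φ, L φ = Real.log (1 + u φ) := by
    intro φ
    rw [hL φ, hu φ]
    congr 1; ring
  -- pointwise a.e. estimates
  have hpt : ∀ᵐ φ ∂μ, |(-L φ + u φ - (u φ) ^ 2 / 2)| ≤ 2 * |u φ| ^ 3 ∧
      |(L φ) ^ 2 - (u φ) ^ 2| ≤ 6 * |u φ| ^ 3 ∧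
      |L φ - u φ| ≤ 2 * (u φ) ^ 2 ∧ |L φ| ≤ 1 := by
    filter_upwards [hae'] with φ h
    have t2 := log1p_taylor2 h
    have t1 := log1p_taylor1 h
    rw [← hLu φ] at t2 t1
    have hLb : |L φ| ≤ 1 := by
      have h6 : |L φ| ≤ |u φ| + 2 * (u φ) ^ 2 := by
        have h7 := abs_sub_abs_le_abs_sub (L φ) (u φ)
        linarith [t1]
      nlinarith [abs_nonneg (u φ), sq_abs (u φ)]
    refine ⟨?_, ?_, t1, hLb⟩
    · have h8 : |(-L φ + u φ - (u φ) ^ 2 / 2)| = |L φ - u φ + (u φ) ^ 2 / 2| := by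
        rw [← abs_neg]; congr 1; ring
      rw [h8]; exact t2
    · have hfac : (L φ) ^ 2 - (u φ) ^ 2 = (L φ - u φ) * (L φ + u φ) := by ring
      rw [hfac, abs_mul]
      have hLpu : |L φ + u φ| ≤ 2 * |u φ| + 2 * (u φ) ^ 2 := by
        have h9 : L φ + u φ = (L φ - u φ) + 2 * u φ := by ring
        calc |L φ + u φ| = |(L φ - u φ) + 2 * u φ| := by rw [h9]
          _ ≤ |L φ - u φ| + |2 * u φ| := abs_add_le _ _
          _ ≤ 2 * (u φ) ^ 2 + 2 * |u φ| := by
              rw [abs_mul, abs_two]; linarith [t1]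
          _ = 2 * |u φ| + 2 * (u φ) ^ 2 := by ring
      have hmm := mul_le_mul t1 hLpu (abs_nonneg _) (by positivity)
      have hb1 : 2 * (u φ) ^ 2 * (2 * |u φ| + 2 * (u φ) ^ 2) ≤ 6 * |u φ| ^ 3 := by
        have e2 : (u φ) ^ 2 = |u φ| ^ 2 := (sq_abs _).symm
        rw [e2]
        nlinarith [abs_nonneg (u φ), pow_nonneg (abs_nonneg (u φ)) 3,
          mul_le_mul_of_nonneg_left h (pow_nonneg (abs_nonneg (u φ)) 3)]
      linarith
  -- integrability helper
  have intb : ∀ f : (Fin n → ℝ) → ℝ, Measurable f → ∀ Cb : ℝ,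
      (∀ᵐ φ ∂μ, |f φ| ≤ Cb) → Integrable f μ := by
    intro f hf Cb hb
    exact memLp_one_iff_integrable.mp
      (MemLp.of_bound hf.aestronglyMeasurable Cb (by simpa [Real.norm_eq_abs] using hb))
  -- integrability of all the pieces
  have Iu : Integrable u μ := intb u hum (1/2) hae'
  have Iu2 : Integrable (fun φ => (u φ) ^ 2) μ := by
    refine intb _ (hum.pow_const 2) (1/4) ?_
    filter_upwards [hae'] with φ h
    rw [abs_of_nonneg (sq_nonneg _)]
    nlinarith [abs_nonneg (u φ), sq_abs (u φ)]
  have Iu3 : Integrable (fun φ => |u φ| ^ 3) μ := by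
    refine intb _ (hum.abs.pow_const 3) (1/8) ?_
    filter_upwards [hae'] with φ h
    rw [abs_of_nonneg (by positivity)]
    have h3 := pow_le_pow_left₀ (abs_nonneg (u φ)) h 3
    norm_num at h3
    linarith
  have Iu4 : Integrable (fun φ => ((u φ) ^ 2) ^ 2) μ := by
    refine intb _ ((hum.pow_const 2).pow_const 2) (1/16) ?_
    filter_upwards [hae'] with φ h
    rw [abs_of_nonneg (by positivity)]
    have h4 := pow_le_pow_left₀ (abs_nonneg (u φ)) h 4
    norm_num at h4
    have e4 : ((u φ) ^ 2) ^ 2 = |u φ| ^ 4 := by rw [← sq_abs (u φ)]; ring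
    linarith [e4 ▸ h4]
  have IL : Integrable L μ := by
    refine intb L hLm 1 ?_
    filter_upwards [hpt] with φ h
    exact h.2.2.2
  have IL2 : Integrable (fun φ => (L φ) ^ 2) μ := by
    refine intb _ (hLm.pow_const 2) 1 ?_
    filter_upwards [hpt] with φ h
    rw [abs_of_nonneg (sq_nonneg _)]
    nlinarith [h.2.2.2, abs_nonneg (L φ), sq_abs (L φ)]
  have Iw : Integrable w μ := by
    refine intb w hwm (3/2) ?_
    filter_upwards [hae'] with φ h
    have hwu : w φ = 1 + u φ := by rw [hu φ]; ring
    rw [hwu]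
    rw [abs_le] at h ⊢
    constructor <;> linarith [h.1, h.2]
  -- ∫ w dμ = 1, hence ∫ u dμ = 0
  have hEw : ∫ φ, w φ ∂μ = 1 := by
    rw [hInt_mu w]
    have hqw : (fun φ => q φ * w φ) = fun φ => Real.exp (-S φ) / Z := by
      funext φ
      rw [hw, hp, mul_div_cancel₀ _ (ne_of_gt (hq0 φ))]
    rw [hqw, integral_div, ← hZ, div_self (ne_of_gt hZpos)]
  have hEu : ∫ φ, u φ ∂μ = 0 := by
    simp only [hu]
    rw [integral_sub Iw (integrable_const 1), hEw, integral_const]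
    simp
  -- names for the main integrals
  obtain ⟨B, hB⟩ : ∃ B : ℝ, B = ∫ φ, (u φ) ^ 2 ∂μ := ⟨_, rfl⟩
  obtain ⟨T, hT⟩ : ∃ T : ℝ, T = ∫ φ, |u φ| ^ 3 ∂μ := ⟨_, rfl⟩
  obtain ⟨EL, hEL⟩ : ∃ EL : ℝ, EL = ∫ φ, L φ ∂μ := ⟨_, rfl⟩
  obtain ⟨EL2, hEL2⟩ : ∃ EL2 : ℝ, EL2 = ∫ φ, (L φ) ^ 2 ∂μ := ⟨_, rfl⟩
  obtain ⟨Rρ, hRρ⟩ : ∃ R : ℝ, R = ∫ φ, (-L φ + u φ - (u φ) ^ 2 / 2) ∂μ := ⟨_, rfl⟩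
  obtain ⟨Rη, hRη⟩ : ∃ R : ℝ, R = ∫ φ, ((L φ) ^ 2 - (u φ) ^ 2) ∂μ := ⟨_, rfl⟩
  obtain ⟨Rr, hRr⟩ : ∃ R : ℝ, R = ∫ φ, (L φ - u φ) ∂μ := ⟨_, rfl⟩
  have hTnn : 0 ≤ T := by rw [hT]; exact integral_nonneg fun φ => by positivity
  have hBnn : 0 ≤ B := by rw [hB]; exact integral_nonneg fun φ => sq_nonneg _
  -- generic bound for |∫ f| by c·T
  have habs_int : ∀ f : (Fin n → ℝ) → ℝ, Integrable f μ → ∀ c : ℝ,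
      (∀ᵐ φ ∂μ, |f φ| ≤ c * |u φ| ^ 3) → |∫ φ, f φ ∂μ| ≤ c * T := by
    intro f hf c hb
    calc |∫ φ, f φ ∂μ| ≤ ∫ φ, |f φ| ∂μ := by
          simpa [Real.norm_eq_abs] using norm_integral_le_integral_norm f (μ := μ)
      _ ≤ ∫ φ, c * |u φ| ^ 3 ∂μ := integral_mono_ae hf.abs (Iu3.const_mul c) hb
      _ = c * T := by rw [integral_const_mul, hT]
  have Iρ : Integrable (fun φ => -L φ + u φ - (u φ) ^ 2 / 2) μ :=
    ((IL.neg.add Iu).sub (Iu2.div_const 2))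
  have Iη : Integrable (fun φ => (L φ) ^ 2 - (u φ) ^ 2) μ := IL2.sub Iu2
  have Ir : Integrable (fun φ => L φ - u φ) μ := IL.sub Iu
  have hEρ : |Rρ| ≤ 2 * T := by
    rw [hRρ]
    refine habs_int _ Iρ 2 ?_
    filter_upwards [hpt] with φ h using h.1
  have hEη : |Rη| ≤ 6 * T := by
    rw [hRη]
    refine habs_int _ Iη 6 ?_
    filter_upwards [hpt] with φ h using h.2.1
  have hEr : |Rr| ≤ 2 * B := by
    rw [hRr]
    calc |∫ φ, (L φ - u φ) ∂μ| ≤ ∫ φ, |L φ - u φ| ∂μ := by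
          simpa [Real.norm_eq_abs] using
            norm_integral_le_integral_norm (fun φ => L φ - u φ) (μ := μ)
      _ ≤ ∫ φ, 2 * (u φ) ^ 2 ∂μ := by
          refine integral_mono_ae Ir.abs (Iu2.const_mul 2) ?_
          filter_upwards [hpt] with φ h using h.2.2.1
      _ = 2 * B := by rw [integral_const_mul, hB]
  -- Jensen: B² ≤ ∫ u⁴ ≤ T/2
  have hmem2 : MemLp (fun φ => (u φ) ^ 2) 2 μ := by
    refine MemLp.of_bound (hum.pow_const 2).aestronglyMeasurable (1/4) ?_
    filter_upwards [hae'] with φ h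
    rw [Real.norm_eq_abs, abs_of_nonneg (sq_nonneg _)]
    nlinarith [abs_nonneg (u φ), sq_abs (u φ)]
  have hJensen : B ^ 2 ≤ ∫ φ, ((u φ) ^ 2) ^ 2 ∂μ := by
    have hvar := ProbabilityTheory.variance_nonneg (fun φ => (u φ) ^ 2) μ
    rw [ProbabilityTheory.variance_eq_sub hmem2] at hvar
    simp only [Pi.pow_apply] at hvar
    rw [hB]
    linarith [hvar]
  have hU4 : (∫ φ, ((u φ) ^ 2) ^ 2 ∂μ) ≤ T / 2 := by
    have hle : (∫ φ, ((u φ) ^ 2) ^ 2 ∂μ) ≤ ∫ φ, (1/2) * |u φ| ^ 3 ∂μ := by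
      refine integral_mono_ae Iu4 (Iu3.const_mul (1/2)) ?_
      filter_upwards [hae'] with φ h
      have e4 : ((u φ) ^ 2) ^ 2 = |u φ| ^ 3 * |u φ| := by rw [← sq_abs (u φ)]; ring
      rw [e4]
      linarith [mul_le_mul_of_nonneg_left h (pow_nonneg (abs_nonneg (u φ)) 3)]
    rw [integral_const_mul] at hle
    rw [hT]
    linarith
  have hErsq : Rr ^ 2 ≤ 2 * T := by
    have h1 : Rr ^ 2 ≤ (2 * B) ^ 2 := by
      nlinarith [hEr, neg_abs_le Rr, le_abs_self Rr, abs_nonneg Rr]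
    nlinarith [hJensen, hU4]
  -- integral identities
  have IA : Integrable (fun φ => -L φ + u φ) μ := IL.neg'.add Iu
  have idρ : Rρ = -EL + 0 - B / 2 := by
    rw [hRρ, hEL, hB, integral_sub IA (Iu2.div_const 2), integral_add IL.neg' Iu,
      integral_neg, hEu, integral_div]
  have idη : Rη = EL2 - B := by
    rw [hRη, hEL2, hB, integral_sub IL2 Iu2]
  have idr : Rr = EL := by
    rw [hRr, hEL, integral_sub IL Iu, hEu]; simp
  -- rewrite the three integrals in the goal
  have hlogqp : ∀ φ, Real.log (q φ / p φ) = -(L φ) := by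
    intro φ
    rw [hL φ, Real.log_div (ne_of_gt (hq0 φ)) (ne_of_gt (hp0 φ)),
      show w φ = p φ / q φ from hw φ,
      Real.log_div (ne_of_gt (hp0 φ)) (ne_of_gt (hq0 φ))]
    ring
  obtain ⟨a, ha⟩ : ∃ a : ℝ, a = Real.log Z := ⟨_, rfl⟩
  have hCfL : ∀ φ, Cf φ = -(L φ + a) := by
    intro φ
    have hwlog : Real.log (w φ) = -S φ - a - Real.log (q φ) := by
      rw [hw, hp,
        Real.log_div (ne_of_gt (by positivity : (0:ℝ) < Real.exp (-S φ) / Z))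
          (ne_of_gt (hq0 φ)),
        Real.log_div (ne_of_gt (Real.exp_pos _)) (ne_of_gt hZpos), Real.log_exp, ← ha]
    rw [hCf φ, hL φ, hwlog]
    ring
  have eA : (∫ φ : Fin n → ℝ, q φ * Real.log (q φ / p φ)) = ∫ φ, -(L φ) ∂μ := by
    rw [hInt_mu]
    congr 1; funext φ; rw [hlogqp φ]
  have eB2 : (∫ φ : Fin n → ℝ, q φ * (Cf φ) ^ 2) = ∫ φ, (L φ + a) ^ 2 ∂μ := by
    rw [hInt_mu]
    congr 1; funext φ; rw [hCfL φ]; ring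
  have eC : (∫ φ : Fin n → ℝ, q φ * Cf φ) = ∫ φ, -(L φ + a) ∂μ := by
    rw [hInt_mu]
    congr 1; funext φ; rw [hCfL φ]
  have eT : (∫ φ : Fin n → ℝ, q φ * |w φ - 1| ^ 3) = T := by
    rw [hT, hInt_mu]
    congr 1; funext φ; rw [hu φ]
  -- expand the μ-integrals
  have exA : ∫ φ, -(L φ) ∂μ = -EL := by rw [hEL, integral_neg]
  have exB : ∫ φ, (L φ + a) ^ 2 ∂μ = EL2 + 2 * a * EL + a ^ 2 := by
    have hsq : (fun φ => (L φ + a) ^ 2) = fun φ => ((L φ) ^ 2 + (2 * a) * L φ) + a ^ 2 := by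
      funext φ; ring
    have IC : Integrable (fun φ => (L φ) ^ 2 + (2 * a) * L φ) μ :=
      IL2.add (IL.const_mul (2 * a))
    rw [hsq, integral_add IC (integrable_const _),
      integral_add IL2 (IL.const_mul (2 * a)), integral_const_mul, integral_const]
    simp only [measure_univ, probReal_univ, smul_eq_mul, one_mul, hEL, hEL2]
  have exC : ∫ φ, -(L φ + a) ∂μ = -(EL + a) := by
    rw [integral_neg, integral_add IL (integrable_const a), integral_const]
    simp only [measure_univ, probReal_univ, smul_eq_mul, one_mul, hEL]
  -- assemble
  rw [eA, eB2, eC, eT, exA, exB, exC]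
  have key : -EL - 1/2 * ((EL2 + 2 * a * EL + a ^ 2) - (-(EL + a)) ^ 2)
      = Rρ - (1/2) * Rη + (1/2) * Rr ^ 2 := by
    rw [idρ, idη, idr]; ring
  rw [key]
  have h1 := abs_le.mp hEρ
  have h2 := abs_le.mp hEη
  rw [abs_le]
  constructor <;> nlinarith [hErsq, hTnn]
end

section
/- For all real numbers a > 0 and b > 0, the Gaussian–quartic integral ∫_{−∞}^{∞} exp(−a x⁴ − b x²) dx equals √(b/(4a)) · exp(b²/(8a)) · ∫_{0}^{∞} exp(−(b²/(8a))·cosh t)·cosh(t/4) dt, i.e., it equals √(b/(4a)) · exp(b²/(8a)) · K_{1/4}(b²/(8a)), where K_{1/4} is the modified Bessel function of the second kind of order 1/4, expressed through its integral representation K_ν(z) = ∫_0^∞ e^{−z cosh t} cosh(νt) dt. -/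
open MeasureTheory Set

/-- Gaussian–quartic integral in terms of the modified Bessel function of the second kind
of order 1/4 (via its integral representation `K_ν(z) = ∫_0^∞ e^{-z cosh t} cosh(νt) dt`):
`∫ exp(-a x⁴ - b x²) dx = √(b/(4a)) · exp(b²/(8a)) · K_{1/4}(b²/(8a))`. -/
theorem integral_exp_neg_quartic_eq_bessel
    (a b : ℝ) (ha : 0 < a) (hb : 0 < b) :
    ∫ x : ℝ, Real.exp (-a * x^4 - b * x^2)
      = Real.sqrt (b / (4 * a)) * Real.exp (b^2 / (8 * a)) *
        ∫ t in Set.Ioi (0 : ℝ),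
          Real.exp (-(b^2 / (8 * a)) * Real.cosh t) * Real.cosh (t / 4) := by
  set z := b^2 / (8 * a) with hz
  set k := Real.sqrt (b / a) with hk
  have hk0 : 0 < k := Real.sqrt_pos.mpr (div_pos hb ha)
  have hk2 : k ^ 2 = b / a := Real.sq_sqrt (div_pos hb ha).le
  -- change of variables on Ioi 0
  set g : ℝ → ℝ := fun t => k * Real.sinh (t / 4) with hg
  have hderiv : ∀ t : ℝ, HasDerivAt g (k / 4 * Real.cosh (t / 4)) t := by
    intro t
    have h1 : HasDerivAt (fun t : ℝ => t / 4) (1 / 4) t := by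
      simpa using (hasDerivAt_id t).div_const 4
    have := (h1.sinh).const_mul k
    rw [show k / 4 * Real.cosh (t / 4) = k * (Real.cosh (t / 4) * (1 / 4)) by ring]
    exact this
  have hmono : StrictMono g := by
    intro s t hst
    have := Real.sinh_lt_sinh.mpr (by linarith : s / 4 < t / 4)
    exact mul_lt_mul_of_pos_left this hk0
  have himg : g '' Ioi 0 = Ioi 0 := by
    ext y
    constructor
    · rintro ⟨t, ht, rfl⟩
      have : Real.sinh 0 < Real.sinh (t / 4) := Real.sinh_lt_sinh.mpr (by linarith [mem_Ioi.mp ht])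
      simp only [Real.sinh_zero] at this
      exact mem_Ioi.mpr (mul_pos hk0 this)
    · intro hy
      refine ⟨4 * Real.arsinh (y / k), ?_, ?_⟩
      · have : 0 < y / k := div_pos (mem_Ioi.mp hy) hk0
        have : 0 < Real.arsinh (y / k) := by
          rw [← Real.arsinh_zero]
          exact Real.arsinh_lt_arsinh.mpr this
        exact mem_Ioi.mpr (by linarith)
      · show k * Real.sinh (4 * Real.arsinh (y / k) / 4) = y
        rw [mul_div_cancel_left₀ _ (by norm_num : (4:ℝ) ≠ 0), Real.sinh_arsinh,
          mul_div_cancel₀ _ hk0.ne']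
  have key : ∫ x in Ioi (0:ℝ), Real.exp (-a * x^4 - b * x^2)
      = ∫ t in Ioi (0:ℝ), |k / 4 * Real.cosh (t / 4)| •
          Real.exp (-a * (g t)^4 - b * (g t)^2) := by
    conv_lhs => rw [← himg]
    exact integral_image_eq_integral_abs_deriv_smul measurableSet_Ioi
      (fun t _ => (hderiv t).hasDerivWithinAt) hmono.injective.injOn (fun x => Real.exp (-a * x^4 - b * x^2))
  -- pointwise simplification
  have hpt : ∀ t : ℝ, |k / 4 * Real.cosh (t / 4)| •
      Real.exp (-a * (g t)^4 - b * (g t)^2)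
      = (k / 4) * (Real.exp z * (Real.exp (-z * Real.cosh t) * Real.cosh (t / 4))) := by
    intro t
    have hc : 0 < Real.cosh (t / 4) := Real.cosh_pos _
    have habs : |k / 4 * Real.cosh (t / 4)| = k / 4 * Real.cosh (t / 4) :=
      abs_of_pos (mul_pos (by positivity) hc)
    have hexp : -a * (g t)^4 - b * (g t)^2 = z + (-z * Real.cosh t) := by
      have h2 : (g t)^2 = (b / a) * Real.sinh (t/4)^2 := by
        rw [hg]; ring_nf; rw [hk2]; ring
      have h4 : (g t)^4 = ((b/a) * Real.sinh (t/4)^2)^2 := by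
        rw [← h2]; ring
      have hcosh2 : Real.cosh (t/2) = 2 * Real.sinh (t/4)^2 + 1 := by
        have := Real.cosh_two_mul (t/4)
        have h' : Real.cosh (t/4)^2 = 1 + Real.sinh (t/4)^2 := Real.cosh_sq' (t/4)
        have ht2 : 2 * (t/4) = t/2 := by ring
        rw [ht2] at this
        rw [this, h']; ring
      have hcosht : Real.cosh t = 2 * Real.cosh (t/2)^2 - 1 := by
        have h1 := Real.cosh_two_mul (t/2)
        have h2' := Real.cosh_sq' (t/2)
        have ht2 : 2 * (t/2) = t := by ring
        rw [ht2] at h1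
        linarith
      rw [h4, h2, hcosht, hcosh2, hz]
      field_simp
      ring
    rw [habs, hexp, Real.exp_add, smul_eq_mul]
    ring
  simp_rw [hpt] at key
  rw [integral_const_mul, integral_const_mul] at key
  -- even function
  have heven : ∫ x : ℝ, Real.exp (-a * x^4 - b * x^2)
      = 2 * ∫ x in Ioi (0:ℝ), Real.exp (-a * x^4 - b * x^2) := by
    rw [← integral_comp_abs (f := fun x => Real.exp (-a * x^4 - b * x^2))]
    congr 1
    ext x
    have h4 : |x|^4 = x^4 := by
      rw [show (4:ℕ) = 2*2 from rfl, pow_mul, pow_mul, sq_abs]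
    rw [h4, sq_abs]
  rw [heven, key]
  have hsq : Real.sqrt (b / (4 * a)) = k / 2 := by
    rw [hk, show b / (4 * a) = (b / a) / 4 by ring,
      Real.sqrt_div (div_pos hb ha).le,
      show Real.sqrt 4 = 2 by
        rw [show (4:ℝ) = 2^2 by norm_num, Real.sqrt_sq (by norm_num : (0:ℝ) ≤ 2)]]
  rw [hsq]
  ring
end

section
/- (Delta method of moments.) Let (X_i)_{i≥1} be i.i.d. real-valued random variables with mean μ := E[X₁], variance σ² := Var(X₁), and finite fourth moment E[X₁⁴] < ∞, and let X̄_N := (1/N)∑_{i=1}^N X_i. Let h : ℝ → ℝ be four times continuously differentiable with its derivatives of orders 1 through 4 uniformly bounded on ℝ. Then there exists a constant C > 0 (depending only on h and on the first four moments of X₁) such that for all N ≥ 1, |E[h(X̄_N)] − h(μ) − h''(μ)σ²/(2N)| ≤ C/N²; i.e., E[h(X̄_N)] = h(μ) + h''(μ)σ²/(2N) + O(1/N²). -/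
open MeasureTheory ProbabilityTheory Filter

private lemma iterDW_eq {f : ℝ → ℝ} (hf : ContDiff ℝ 4 f) {m : ℕ} (hm : m ≤ 4)
    {s : Set ℝ} (hs : UniqueDiffOn ℝ s) {x : ℝ} (hx : x ∈ s) :
    iteratedDerivWithin m f s x = iteratedDeriv m f x := by
  have H : HasFTaylorSeriesUpTo 4 f (ftaylorSeries ℝ f) := contDiff_iff_ftaylorSeries.mp hf
  have h1 := H.eq_iteratedFDeriv (m := m) (Nat.cast_le.mpr hm) x
  have h2 := ((hasFTaylorSeriesUpToOn_univ_iff.mpr H).mono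
    (Set.subset_univ s)).eq_iteratedFDerivWithin_of_uniqueDiffOn (m := m)
    (Nat.cast_le.mpr hm) hs hx
  rw [iteratedDerivWithin_eq_iteratedFDerivWithin, iteratedDeriv_eq_iteratedFDeriv, ← h2, h1]

private lemma taylor_bound_right {h : ℝ → ℝ} (hcd4 : ContDiff ℝ 4 h) {M μ x : ℝ}
    (hM : ∀ t, |iteratedDeriv 4 h t| ≤ M) (hx : μ ≤ x) :
    |h x - h μ - iteratedDeriv 1 h μ * (x - μ) - iteratedDeriv 2 h μ * (x - μ)^2 / 2
      - iteratedDeriv 3 h μ * (x - μ)^3 / 6| ≤ M * (x - μ)^4 / 24 := by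
  have hM0 : 0 ≤ M := le_trans (abs_nonneg _) (hM μ)
  rcases eq_or_lt_of_le hx with rfl | hlt
  · simp
  have hus : UniqueDiffOn ℝ (Set.Icc μ x) := uniqueDiffOn_Icc hlt
  have hcd : ContDiffOn ℝ 3 h (Set.Icc μ x) := (hcd4.of_le (by norm_num)).contDiffOn
  have hdiff : DifferentiableOn ℝ (iteratedDerivWithin 3 h (Set.Icc μ x)) (Set.Ioo μ x) := by
    apply ((hcd4.differentiable_iteratedDeriv 3 (by norm_num)).differentiableOn).congr
    intro y hy
    exact iterDW_eq hcd4 (by norm_num) hus (Set.mem_Icc_of_Ioo hy)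
  obtain ⟨x', hx', hEq⟩ := taylor_mean_remainder_lagrange hlt.ne (by rwa [Set.uIcc_of_le hx])
    (by rwa [Set.uIcc_of_le hx, Set.uIoo_of_le hx])
  rw [Set.uIcc_of_le hx] at hEq
  rw [Set.uIoo_of_le hx] at hx'
  rw [taylor_within_apply] at hEq
  simp only [Finset.sum_range_succ, Finset.sum_range_zero, smul_eq_mul] at hEq
  rw [iterDW_eq hcd4 (by norm_num) hus (Set.left_mem_Icc.mpr hx),
      iterDW_eq hcd4 (by norm_num) hus (Set.left_mem_Icc.mpr hx),
      iterDW_eq hcd4 (by norm_num) hus (Set.left_mem_Icc.mpr hx),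
      iterDW_eq hcd4 (by norm_num) hus (Set.left_mem_Icc.mpr hx),
      iterDW_eq hcd4 (by norm_num) hus (Set.mem_Icc_of_Ioo hx')] at hEq
  have hrem : h x - h μ - iteratedDeriv 1 h μ * (x - μ) - iteratedDeriv 2 h μ * (x - μ)^2 / 2
      - iteratedDeriv 3 h μ * (x - μ)^3 / 6
      = iteratedDeriv 4 h x' * (x - μ)^4 / 24 := by
    simp only [iteratedDeriv_zero] at hEq
    norm_num [Nat.factorial] at hEq
    rw [iteratedDeriv_one]
    linarith [hEq]
  rw [hrem, abs_div, abs_mul, abs_of_nonneg (pow_nonneg (by linarith : (0:ℝ) ≤ x - μ) 4),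
      (by norm_num : |(24:ℝ)| = 24)]
  gcongr
  exact hM x'

private lemma taylor_bound {h : ℝ → ℝ} (hcd4 : ContDiff ℝ 4 h) {M : ℝ}
    (hM : ∀ t, |iteratedDeriv 4 h t| ≤ M) (μ x : ℝ) :
    |h x - h μ - iteratedDeriv 1 h μ * (x - μ) - iteratedDeriv 2 h μ * (x - μ)^2 / 2
      - iteratedDeriv 3 h μ * (x - μ)^3 / 6| ≤ M * (x - μ)^4 / 24 := by
  rcases le_total μ x with hx | hx
  · exact taylor_bound_right hcd4 hM hx
  · have hgiter : ∀ (k : ℕ) (t : ℝ), iteratedDeriv k (fun t => h (2*μ - t)) t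
        = (-1:ℝ)^k * iteratedDeriv k h (2*μ - t) := by
      intro k t
      have e := iteratedDeriv_comp_neg k (fun z => h (2*μ + z)) t
      rw [iteratedDeriv_comp_const_add k h (2*μ)] at e
      simp only [← sub_eq_add_neg, smul_eq_mul] at e
      exact e
    have hg : ContDiff ℝ 4 (fun t => h (2*μ - t)) :=
      hcd4.comp (contDiff_const.sub contDiff_id)
    have hMg : ∀ t, |iteratedDeriv 4 (fun t => h (2*μ - t)) t| ≤ M := by
      intro t
      rw [hgiter]
      rw [show ((-1:ℝ))^4 = 1 by norm_num, one_mul]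
      exact hM (2*μ - t)
    have key := taylor_bound_right hg hMg (show μ ≤ 2*μ - x by linarith)
    simp only [hgiter] at key
    rw [show 2*μ - (2*μ - x) = x by ring, show 2*μ - μ = μ by ring] at key
    have e2 : h x - h μ - iteratedDeriv 1 h μ * (x - μ) - iteratedDeriv 2 h μ * (x - μ)^2 / 2
        - iteratedDeriv 3 h μ * (x - μ)^3 / 6
        = h x - h μ - (-1:ℝ)^1 * iteratedDeriv 1 h μ * (2*μ - x - μ)
          - (-1:ℝ)^2 * iteratedDeriv 2 h μ * (2*μ - x - μ)^2 / 2
          - (-1:ℝ)^3 * iteratedDeriv 3 h μ * (2*μ - x - μ)^3 / 6 := by ring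
    rw [e2]
    exact key.trans (le_of_eq (by ring))

private lemma sum_moments
    {Ω : Type*} [MeasureSpace Ω] [IsProbabilityMeasure (ℙ : Measure Ω)]
    (Y : ℕ → Ω → ℝ) (hmeas : ∀ i, Measurable (Y i))
    (hindep : iIndepFun Y ℙ)
    (hint : ∀ i, ∀ b : ℕ, b ≤ 4 → Integrable (fun ω => (Y i ω)^b))
    (heq : ∀ i, ∀ b : ℕ, b ≤ 4 → ∫ ω, (Y i ω)^b = ∫ ω, (Y 0 ω)^b)
    (hmean : ∫ ω, (Y 0 ω)^1 = 0) (N : ℕ) :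
    (∀ b : ℕ, b ≤ 4 → Integrable (fun ω => (∑ i ∈ Finset.range N, Y i ω)^b)) ∧
    (∫ ω, (∑ i ∈ Finset.range N, Y i ω)^1 = 0) ∧
    (∫ ω, (∑ i ∈ Finset.range N, Y i ω)^2 = N * (∫ ω, (Y 0 ω)^2)) ∧
    (∫ ω, (∑ i ∈ Finset.range N, Y i ω)^3 = N * (∫ ω, (Y 0 ω)^3)) ∧
    (∫ ω, (∑ i ∈ Finset.range N, Y i ω)^4
      = N * (∫ ω, (Y 0 ω)^4) + 3*N*(N-1) * (∫ ω, (Y 0 ω)^2)^2) := by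
  induction N with
  | zero =>
    refine ⟨fun b hb => ?_, by simp, by simp, by simp, by simp⟩
    simp only [Finset.range_zero, Finset.sum_empty]
    exact integrable_const ((0:ℝ)^b)
  | succ N IH =>
    obtain ⟨hSint0, hS10, hS20, hS30, hS40⟩ := IH
    set S : Ω → ℝ := fun ω => ∑ i ∈ Finset.range N, Y i ω with hSdef
    set Z : Ω → ℝ := Y N with hZdef
    have hSint : ∀ b : ℕ, b ≤ 4 → Integrable (fun ω => S ω^b) := hSint0
    have hS1 : ∫ ω, S ω^1 = 0 := hS10
    have hS2 : ∫ ω, S ω^2 = N * (∫ ω, (Y 0 ω)^2) := hS20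
    have hS3 : ∫ ω, S ω^3 = N * (∫ ω, (Y 0 ω)^3) := hS30
    have hS4 : ∫ ω, S ω^4 = N * (∫ ω, (Y 0 ω)^4) + 3*N*(N-1) * (∫ ω, (Y 0 ω)^2)^2 := hS40
    have hSZ : IndepFun S Z ℙ := by
      have := hindep.indepFun_sum_range_succ hmeas N
      have e : (∑ j ∈ Finset.range N, Y j) = S := by
        funext ω; simp [hSdef, Finset.sum_apply]
      rwa [e] at this
    have hpow : ∀ a b : ℕ, IndepFun (fun ω => S ω ^ a) (fun ω => Z ω ^ b) ℙ := by
      intro a b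
      exact hSZ.comp (measurable_id.pow_const a) (measurable_id.pow_const b)
    have hZint : ∀ b : ℕ, b ≤ 4 → Integrable (fun ω => Z ω ^ b) := hint N
    have hmulint : ∀ a b : ℕ, a ≤ 4 → b ≤ 4 → Integrable (fun ω => S ω^a * Z ω^b) :=
      fun a b ha hb => (hpow a b).integrable_mul (hSint a ha) (hZint b hb)
    have hmul : ∀ a b : ℕ, a ≤ 4 → b ≤ 4 →
        ∫ ω, S ω^a * Z ω^b = (∫ ω, S ω^a) * ∫ ω, Z ω^b :=
      fun a b ha hb => (hpow a b).integral_mul_eq_mul_integral (hSint a ha).1 (hZint b hb).1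
    have hZval : ∀ b : ℕ, b ≤ 4 → ∫ ω, Z ω^b = ∫ ω, (Y 0 ω)^b := heq N
    have esum : ∀ ω, ∑ i ∈ Finset.range (N+1), Y i ω = S ω + Z ω := by
      intro ω; rw [Finset.sum_range_succ]
    have hZ1 : ∫ ω, Z ω^1 = 0 := by rw [hZval 1 (by norm_num)]; exact hmean
    -- integrals of the cross terms
    have t11 : ∫ ω, 2*(S ω^1 * Z ω^1) = 2 * ((∫ ω, S ω^1) * (∫ ω, Z ω^1)) := by
      rw [integral_const_mul, hmul 1 1 (by norm_num) (by norm_num)]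
    have t21 : ∫ ω, 3*(S ω^2 * Z ω^1) = 3 * ((∫ ω, S ω^2) * (∫ ω, Z ω^1)) := by
      rw [integral_const_mul, hmul 2 1 (by norm_num) (by norm_num)]
    have t12 : ∫ ω, 3*(S ω^1 * Z ω^2) = 3 * ((∫ ω, S ω^1) * (∫ ω, Z ω^2)) := by
      rw [integral_const_mul, hmul 1 2 (by norm_num) (by norm_num)]
    have t31 : ∫ ω, 4*(S ω^3 * Z ω^1) = 4 * ((∫ ω, S ω^3) * (∫ ω, Z ω^1)) := by
      rw [integral_const_mul, hmul 3 1 (by norm_num) (by norm_num)]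
    have t22 : ∫ ω, 6*(S ω^2 * Z ω^2) = 6 * ((∫ ω, S ω^2) * (∫ ω, Z ω^2)) := by
      rw [integral_const_mul, hmul 2 2 (by norm_num) (by norm_num)]
    have t13 : ∫ ω, 4*(S ω^1 * Z ω^3) = 4 * ((∫ ω, S ω^1) * (∫ ω, Z ω^3)) := by
      rw [integral_const_mul, hmul 1 3 (by norm_num) (by norm_num)]
    refine ⟨?_, ?_, ?_, ?_, ?_⟩
    · intro b hb
      simp only [esum]
      interval_cases b
      · simp only [pow_zero]; exact integrable_const (1:ℝ)
      · have e : (fun ω => (S ω + Z ω)^1) = fun ω => S ω^1 + Z ω^1 := by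
          funext ω; ring
        rw [e]; exact (hSint 1 (by norm_num)).add (hZint 1 (by norm_num))
      · have e : (fun ω => (S ω + Z ω)^2)
            = fun ω => S ω^2 + (2*(S ω^1 * Z ω^1) + Z ω^2) := by funext ω; ring
        rw [e]
        exact (hSint 2 (by norm_num)).add
          (((hmulint 1 1 (by norm_num) (by norm_num)).const_mul 2).add (hZint 2 (by norm_num)))
      · have e : (fun ω => (S ω + Z ω)^3)
            = fun ω => S ω^3 + (3*(S ω^2 * Z ω^1) + (3*(S ω^1 * Z ω^2) + Z ω^3)) := by
          funext ω; ring
        rw [e]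
        exact (hSint 3 (by norm_num)).add
          (((hmulint 2 1 (by norm_num) (by norm_num)).const_mul 3).add
            (((hmulint 1 2 (by norm_num) (by norm_num)).const_mul 3).add
              (hZint 3 (by norm_num))))
      · have e : (fun ω => (S ω + Z ω)^4)
            = fun ω => S ω^4 + (4*(S ω^3 * Z ω^1) + (6*(S ω^2 * Z ω^2)
              + (4*(S ω^1 * Z ω^3) + Z ω^4))) := by funext ω; ring
        rw [e]
        exact (hSint 4 (by norm_num)).add
          (((hmulint 3 1 (by norm_num) (by norm_num)).const_mul 4).add
            (((hmulint 2 2 (by norm_num) (by norm_num)).const_mul 6).add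
              (((hmulint 1 3 (by norm_num) (by norm_num)).const_mul 4).add
                (hZint 4 (by norm_num)))))
    · simp only [esum]
      have e : (fun ω => (S ω + Z ω)^1) = fun ω => S ω^1 + Z ω^1 := by funext ω; ring
      rw [e]
      have i1 : ∫ ω, (S ω^1 + Z ω^1) = (∫ ω, S ω^1) + ∫ ω, Z ω^1 :=
        integral_add (hSint 1 (by norm_num)) (hZint 1 (by norm_num))
      rw [i1, hS1, hZ1]; ring
    · simp only [esum]
      have e : (fun ω => (S ω + Z ω)^2)
          = fun ω => S ω^2 + (2*(S ω^1 * Z ω^1) + Z ω^2) := by funext ω; ring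
      rw [e]
      have i1 : ∫ ω, (S ω^2 + (2*(S ω^1 * Z ω^1) + Z ω^2))
          = (∫ ω, S ω^2) + ∫ ω, (2*(S ω^1 * Z ω^1) + Z ω^2) :=
        integral_add (hSint 2 (by norm_num))
          (((hmulint 1 1 (by norm_num) (by norm_num)).const_mul 2).add (hZint 2 (by norm_num)))
      have i2 : ∫ ω, (2*(S ω^1 * Z ω^1) + Z ω^2)
          = (∫ ω, 2*(S ω^1 * Z ω^1)) + ∫ ω, Z ω^2 :=
        integral_add ((hmulint 1 1 (by norm_num) (by norm_num)).const_mul 2)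
          (hZint 2 (by norm_num))
      rw [i1, i2, t11, hS1, hZ1, hS2, hZval 2 (by norm_num)]
      push_cast; ring
    · simp only [esum]
      have e : (fun ω => (S ω + Z ω)^3)
          = fun ω => S ω^3 + (3*(S ω^2 * Z ω^1) + (3*(S ω^1 * Z ω^2) + Z ω^3)) := by
        funext ω; ring
      rw [e]
      have i1 : ∫ ω, (S ω^3 + (3*(S ω^2 * Z ω^1) + (3*(S ω^1 * Z ω^2) + Z ω^3)))
          = (∫ ω, S ω^3) + ∫ ω, (3*(S ω^2 * Z ω^1) + (3*(S ω^1 * Z ω^2) + Z ω^3)) :=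
        integral_add (hSint 3 (by norm_num))
          (((hmulint 2 1 (by norm_num) (by norm_num)).const_mul 3).add
            (((hmulint 1 2 (by norm_num) (by norm_num)).const_mul 3).add
              (hZint 3 (by norm_num))))
      have i2 : ∫ ω, (3*(S ω^2 * Z ω^1) + (3*(S ω^1 * Z ω^2) + Z ω^3))
          = (∫ ω, 3*(S ω^2 * Z ω^1)) + ∫ ω, (3*(S ω^1 * Z ω^2) + Z ω^3) :=
        integral_add ((hmulint 2 1 (by norm_num) (by norm_num)).const_mul 3)
          (((hmulint 1 2 (by norm_num) (by norm_num)).const_mul 3).add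
            (hZint 3 (by norm_num)))
      have i3 : ∫ ω, (3*(S ω^1 * Z ω^2) + Z ω^3)
          = (∫ ω, 3*(S ω^1 * Z ω^2)) + ∫ ω, Z ω^3 :=
        integral_add ((hmulint 1 2 (by norm_num) (by norm_num)).const_mul 3)
          (hZint 3 (by norm_num))
      rw [i1, i2, i3, t21, t12, hS1, hZ1, hS2, hS3, hZval 2 (by norm_num),
        hZval 3 (by norm_num)]
      push_cast; ring
    · simp only [esum]
      have e : (fun ω => (S ω + Z ω)^4)
          = fun ω => S ω^4 + (4*(S ω^3 * Z ω^1) + (6*(S ω^2 * Z ω^2)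
            + (4*(S ω^1 * Z ω^3) + Z ω^4))) := by funext ω; ring
      rw [e]
      have i1 : ∫ ω, (S ω^4 + (4*(S ω^3 * Z ω^1) + (6*(S ω^2 * Z ω^2)
            + (4*(S ω^1 * Z ω^3) + Z ω^4))))
          = (∫ ω, S ω^4) + ∫ ω, (4*(S ω^3 * Z ω^1) + (6*(S ω^2 * Z ω^2)
            + (4*(S ω^1 * Z ω^3) + Z ω^4))) :=
        integral_add (hSint 4 (by norm_num))
          (((hmulint 3 1 (by norm_num) (by norm_num)).const_mul 4).add
            (((hmulint 2 2 (by norm_num) (by norm_num)).const_mul 6).add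
              (((hmulint 1 3 (by norm_num) (by norm_num)).const_mul 4).add
                (hZint 4 (by norm_num)))))
      have i2 : ∫ ω, (4*(S ω^3 * Z ω^1) + (6*(S ω^2 * Z ω^2)
            + (4*(S ω^1 * Z ω^3) + Z ω^4)))
          = (∫ ω, 4*(S ω^3 * Z ω^1)) + ∫ ω, (6*(S ω^2 * Z ω^2)
            + (4*(S ω^1 * Z ω^3) + Z ω^4)) :=
        integral_add ((hmulint 3 1 (by norm_num) (by norm_num)).const_mul 4)
          (((hmulint 2 2 (by norm_num) (by norm_num)).const_mul 6).add
            (((hmulint 1 3 (by norm_num) (by norm_num)).const_mul 4).add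
              (hZint 4 (by norm_num))))
      have i3 : ∫ ω, (6*(S ω^2 * Z ω^2) + (4*(S ω^1 * Z ω^3) + Z ω^4))
          = (∫ ω, 6*(S ω^2 * Z ω^2)) + ∫ ω, (4*(S ω^1 * Z ω^3) + Z ω^4) :=
        integral_add ((hmulint 2 2 (by norm_num) (by norm_num)).const_mul 6)
          (((hmulint 1 3 (by norm_num) (by norm_num)).const_mul 4).add
            (hZint 4 (by norm_num)))
      have i4 : ∫ ω, (4*(S ω^1 * Z ω^3) + Z ω^4)
          = (∫ ω, 4*(S ω^1 * Z ω^3)) + ∫ ω, Z ω^4 :=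
        integral_add ((hmulint 1 3 (by norm_num) (by norm_num)).const_mul 4)
          (hZint 4 (by norm_num))
      rw [i1, i2, i3, i4, t31, t22, t13, hS1, hZ1, hS2, hS3, hS4,
        hZval 2 (by norm_num), hZval 3 (by norm_num), hZval 4 (by norm_num)]
      push_cast; ring

-- pointwise power bound
private lemma pow_le_aux {t : ℝ} {b : ℕ} (hb : b ≤ 4) : |t ^ b| ≤ 1 + t^4 := by
  rw [abs_pow]
  rcases le_total |t| 1 with h1 | h1
  · have h2 : |t|^b ≤ 1 := pow_le_one₀ (abs_nonneg t) h1
    have h3 : (0:ℝ) ≤ t^4 := by positivity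
    linarith
  · have h2 : |t|^b ≤ |t|^4 := pow_le_pow_right₀ h1 hb
    have h3 : |t|^4 = t^4 := by
      rw [← abs_pow]; exact abs_of_nonneg (by positivity)
    linarith

private lemma quartic_bound (x c : ℝ) : (x - c)^4 ≤ 8*x^4 + 8*c^4 := by
  nlinarith [sq_nonneg (x + c), sq_nonneg (x - c), sq_nonneg (x^2 - c^2),
    sq_nonneg (x^2 + c^2), sq_nonneg ((x-c)^2), sq_nonneg x, sq_nonneg c]


set_option maxHeartbeats 1600000 in
/-- Delta method of moments: for i.i.d. real random variables with finite fourth moment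
and `h` four times continuously differentiable with uniformly bounded derivatives,
`E[h(X̄_N)] = h(μ) + h''(μ)σ²/(2N) + O(1/N²)`. -/
theorem delta_method_of_moments
    {Ω : Type*} [MeasureSpace Ω] [IsProbabilityMeasure (ℙ : Measure Ω)]
    (X : ℕ → Ω → ℝ)
    (hmeas : ∀ i, Measurable (X i))
    (hindep : iIndepFun X ℙ)
    (hident : ∀ i, IdentDistrib (X i) (X 0) ℙ ℙ)
    (hmom4 : Integrable (fun ω => (X 0 ω)^4))
    (μ : ℝ) (hμ : μ = ∫ ω, X 0 ω)
    (σ2 : ℝ) (hσ2 : σ2 = variance (X 0) ℙ)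
    (h : ℝ → ℝ) (hsmooth : ContDiff ℝ 4 h)
    (hbdd : ∀ k : ℕ, 1 ≤ k → k ≤ 4 → ∃ M : ℝ, ∀ x : ℝ, |iteratedDeriv k h x| ≤ M) :
    ∃ C : ℝ, 0 < C ∧ ∀ N : ℕ, 1 ≤ N →
      |(∫ ω, h ((N : ℝ)⁻¹ * ∑ i ∈ Finset.range N, X i ω))
          - h μ - iteratedDeriv 2 h μ * σ2 / (2 * N)|
        ≤ C / (N : ℝ)^2 := by
  set Y : ℕ → Ω → ℝ := fun i ω => X i ω - μ with hYdef
  have hYmeas : ∀ i, Measurable (Y i) := fun i => (hmeas i).sub measurable_const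
  have hYindep : iIndepFun Y ℙ :=
    hindep.comp (fun _ => fun x => x - μ) (fun _ => measurable_id.sub measurable_const)
  have hdom : Integrable (fun ω => 8*(X 0 ω)^4 + (9 + 8*μ^4)) :=
    (hmom4.const_mul 8).add (integrable_const _)
  have hY0int : ∀ b : ℕ, b ≤ 4 → Integrable (fun ω => (Y 0 ω)^b) := by
    intro b hb
    refine hdom.mono (((hmeas 0).sub measurable_const).pow_const b).aestronglyMeasurable
      (ae_of_all _ fun ω => ?_)
    have h1 := pow_le_aux (t := X 0 ω - μ) hb
    have h2 := quartic_bound (X 0 ω) μ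
    have h3 : (0:ℝ) ≤ 8*(X 0 ω)^4 + (9 + 8*μ^4) := by positivity
    rw [Real.norm_eq_abs, Real.norm_eq_abs, abs_of_nonneg h3]
    simp only [hYdef]
    linarith
  have hYpow_ident : ∀ (i b : ℕ),
      IdentDistrib (fun ω => (Y i ω)^b) (fun ω => (Y 0 ω)^b) ℙ ℙ :=
    fun i b => (hident i).comp ((measurable_id.sub measurable_const).pow_const b)
  have hYint : ∀ i, ∀ b : ℕ, b ≤ 4 → Integrable (fun ω => (Y i ω)^b) :=
    fun i b hb => ((hYpow_ident i b).integrable_iff).mpr (hY0int b hb)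
  have hYeq : ∀ i, ∀ b : ℕ, b ≤ 4 → ∫ ω, (Y i ω)^b = ∫ ω, (Y 0 ω)^b :=
    fun i b _ => (hYpow_ident i b).integral_eq
  have hX0int : Integrable (X 0) := by
    have h1 : Integrable (fun ω => (Y 0 ω)^1 + μ) :=
      (hY0int 1 (by norm_num)).add (integrable_const μ)
    exact h1.congr (ae_of_all _ fun ω => by simp [hYdef])
  have hmean : ∫ ω, (Y 0 ω)^1 = 0 := by
    have e : (fun ω => (Y 0 ω)^1) = fun ω => X 0 ω - μ := by
      funext ω; simp [hYdef]
    rw [e, integral_sub hX0int (integrable_const μ), integral_const]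
    simp [← hμ]
  have hσ2' : σ2 = ∫ ω, (Y 0 ω)^2 := by
    have hdom2 : Integrable (fun ω => 1 + (X 0 ω)^4) := (integrable_const (1:ℝ)).add hmom4
    have hsq : Integrable (fun ω => (X 0 ω)^2) := by
      refine hdom2.mono
        ((hmeas 0).pow_const 2).aestronglyMeasurable (ae_of_all _ fun ω => ?_)
      have h1 := pow_le_aux (t := X 0 ω) (show (2:ℕ) ≤ 4 by norm_num)
      have h3 : (0:ℝ) ≤ 1 + (X 0 ω)^4 := by positivity
      rw [Real.norm_eq_abs, Real.norm_eq_abs, abs_of_nonneg h3]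
      exact h1
    have hL2 : MemLp (X 0) 2 ℙ :=
      (memLp_two_iff_integrable_sq (hmeas 0).aestronglyMeasurable).mpr hsq
    rw [hσ2, variance_eq_integral hL2.aemeasurable]
    congr 1
    funext ω
    simp [hYdef, ← hμ]
  obtain ⟨M4, hM4⟩ := hbdd 4 (by norm_num) (by norm_num)
  have hM40 : 0 ≤ M4 := le_trans (abs_nonneg _) (hM4 0)
  set m2 := ∫ ω, (Y 0 ω)^2 with hm2def
  set m3 := ∫ ω, (Y 0 ω)^3 with hm3def
  set m4 := ∫ ω, (Y 0 ω)^4 with hm4def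
  have hm4nn : 0 ≤ m4 := integral_nonneg (fun ω => by positivity)
  have hCnn : 0 ≤ M4/24 * (m4 + 3*m2^2) :=
    mul_nonneg (by linarith) (by nlinarith [sq_nonneg m2])
  refine ⟨|iteratedDeriv 3 h μ| * |m3| / 6 + M4/24 * (m4 + 3*m2^2) + 1, by
    have h0 : 0 ≤ |iteratedDeriv 3 h μ| * |m3| / 6 := by positivity
    linarith, ?_⟩
  intro N hN
  have hNpos : (0:ℝ) < N := by exact_mod_cast hN
  have hN1 : (1:ℝ) ≤ N := by exact_mod_cast hN
  have hNne : (N:ℝ) ≠ 0 := ne_of_gt hNpos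
  obtain ⟨hI, I1, I2, I3, I4⟩ := sum_moments Y hYmeas hYindep hYint hYeq hmean N
  set s : Ω → ℝ := fun ω => ∑ i ∈ Finset.range N, Y i ω with hsdef
  have hI' : ∀ b : ℕ, b ≤ 4 → Integrable (fun ω => (s ω)^b) := hI
  have I1' : ∫ ω, (s ω)^1 = 0 := I1
  have I2' : ∫ ω, (s ω)^2 = N * m2 := I2
  have I3' : ∫ ω, (s ω)^3 = N * m3 := I3
  have I4' : ∫ ω, (s ω)^4 = N * m4 + 3*N*((N:ℝ)-1) * m2^2 := I4
  set n1 : ℝ := (N:ℝ)⁻¹ with hn1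
  have ebar : ∀ ω, n1 * ∑ i ∈ Finset.range N, X i ω = μ + n1 * s ω := by
    intro ω
    have hsum : s ω = (∑ i ∈ Finset.range N, X i ω) - N * μ := by
      simp only [hsdef, hYdef, Finset.sum_sub_distrib, Finset.sum_const,
        Finset.card_range, nsmul_eq_mul]
    rw [hn1, hsum]
    field_simp
    ring
  have hTay : ∀ ω, |h (μ + n1 * s ω) - h μ - iteratedDeriv 1 h μ * (n1 * s ω)
      - iteratedDeriv 2 h μ * (n1 * s ω)^2/2 - iteratedDeriv 3 h μ * (n1 * s ω)^3/6|
      ≤ M4 * (n1 * s ω)^4/24 := by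
    intro ω
    have := taylor_bound hsmooth hM4 μ (μ + n1 * s ω)
    simpa using this
  set P : Ω → ℝ := fun ω => h μ + ((iteratedDeriv 1 h μ * n1) * (s ω)^1
      + ((iteratedDeriv 2 h μ / 2 * n1^2) * (s ω)^2
      + (iteratedDeriv 3 h μ / 6 * n1^3) * (s ω)^3)) with hPdef
  have a1 : Integrable (fun ω => (iteratedDeriv 1 h μ * n1) * (s ω)^1) :=
    (hI' 1 (by norm_num)).const_mul _
  have a2 : Integrable (fun ω => (iteratedDeriv 2 h μ / 2 * n1^2) * (s ω)^2) :=
    (hI' 2 (by norm_num)).const_mul _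
  have a3 : Integrable (fun ω => (iteratedDeriv 3 h μ / 6 * n1^3) * (s ω)^3) :=
    (hI' 3 (by norm_num)).const_mul _
  have hPint : Integrable P := (integrable_const (h μ)).add (a1.add (a2.add a3))
  have iP : ∫ ω, P ω = h μ + ((iteratedDeriv 1 h μ * n1) * (∫ ω, (s ω)^1)
      + ((iteratedDeriv 2 h μ / 2 * n1^2) * (∫ ω, (s ω)^2)
      + (iteratedDeriv 3 h μ / 6 * n1^3) * (∫ ω, (s ω)^3))) := by
    have i1 : ∫ ω, P ω = (∫ ω, (fun _ => h μ) ω)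
        + ∫ ω, ((iteratedDeriv 1 h μ * n1) * (s ω)^1
          + ((iteratedDeriv 2 h μ / 2 * n1^2) * (s ω)^2
          + (iteratedDeriv 3 h μ / 6 * n1^3) * (s ω)^3)) :=
      integral_add (integrable_const (h μ)) (a1.add (a2.add a3))
    have i2 : ∫ ω, ((iteratedDeriv 1 h μ * n1) * (s ω)^1
          + ((iteratedDeriv 2 h μ / 2 * n1^2) * (s ω)^2
          + (iteratedDeriv 3 h μ / 6 * n1^3) * (s ω)^3))
        = (∫ ω, (iteratedDeriv 1 h μ * n1) * (s ω)^1)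
          + ∫ ω, ((iteratedDeriv 2 h μ / 2 * n1^2) * (s ω)^2
          + (iteratedDeriv 3 h μ / 6 * n1^3) * (s ω)^3) :=
      integral_add a1 (a2.add a3)
    have i3 : ∫ ω, ((iteratedDeriv 2 h μ / 2 * n1^2) * (s ω)^2
          + (iteratedDeriv 3 h μ / 6 * n1^3) * (s ω)^3)
        = (∫ ω, (iteratedDeriv 2 h μ / 2 * n1^2) * (s ω)^2)
          + ∫ ω, (iteratedDeriv 3 h μ / 6 * n1^3) * (s ω)^3 :=
      integral_add a2 a3
    rw [i1, i2, i3, integral_const_mul, integral_const_mul, integral_const_mul, integral_const]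
    simp
  set R : Ω → ℝ := fun ω => h (μ + n1 * s ω) - P ω with hRdef
  have hs_meas : Measurable s := by
    apply Finset.measurable_sum
    exact fun i _ => hYmeas i
  have hP_meas : Measurable P := by
    apply Measurable.add measurable_const
    apply Measurable.add ((hs_meas.pow_const 1).const_mul _)
    exact Measurable.add ((hs_meas.pow_const 2).const_mul _)
      ((hs_meas.pow_const 3).const_mul _)
  have hRmeas : AEStronglyMeasurable R ℙ :=
    ((hsmooth.continuous.measurable.comp
      (measurable_const.add (hs_meas.const_mul n1))).sub hP_meas).aestronglyMeasurable
  have hRbound : ∀ ω, |R ω| ≤ (M4/24 * n1^4) * (s ω)^4 := by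
    intro ω
    have e : R ω = h (μ + n1 * s ω) - h μ - iteratedDeriv 1 h μ * (n1 * s ω)
        - iteratedDeriv 2 h μ * (n1 * s ω)^2/2
        - iteratedDeriv 3 h μ * (n1 * s ω)^3/6 := by
      simp only [hRdef, hPdef]; ring
    rw [e]
    exact (hTay ω).trans (le_of_eq (by ring))
  have hgint : Integrable (fun ω => (M4/24 * n1^4) * (s ω)^4) :=
    (hI' 4 (by norm_num)).const_mul _
  have hRint : Integrable R := by
    refine hgint.mono hRmeas (ae_of_all _ fun ω => ?_)
    rw [Real.norm_eq_abs, Real.norm_eq_abs]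
    exact (hRbound ω).trans (le_abs_self _)
  have hRabs : |∫ ω, R ω| ≤ (M4/24 * n1^4) * (N * m4 + 3*N*((N:ℝ)-1) * m2^2) :=
    calc |∫ ω, R ω| ≤ ∫ ω, |R ω| := by
          simpa [Real.norm_eq_abs] using norm_integral_le_integral_norm (μ := ℙ) R
      _ ≤ ∫ ω, (M4/24 * n1^4) * (s ω)^4 :=
          integral_mono hRint.abs hgint (fun ω => hRbound ω)
      _ = (M4/24 * n1^4) * ∫ ω, (s ω)^4 := integral_const_mul _ _
      _ = _ := by rw [I4']
  have hsplit : ∫ ω, h (n1 * ∑ i ∈ Finset.range N, X i ω) = (∫ ω, P ω) + ∫ ω, R ω := by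
    have e : (fun ω => h (n1 * ∑ i ∈ Finset.range N, X i ω)) = fun ω => P ω + R ω := by
      funext ω; rw [ebar ω]; simp only [hRdef]; ring
    rw [e]
    exact integral_add hPint hRint
  rw [hsplit, iP, I1', I2', I3', hσ2']
  have keyeq : h μ + ((iteratedDeriv 1 h μ * n1) * 0
      + ((iteratedDeriv 2 h μ / 2 * n1^2) * ((N:ℝ) * m2)
      + (iteratedDeriv 3 h μ / 6 * n1^3) * ((N:ℝ) * m3))) + (∫ ω, R ω)
      - h μ - iteratedDeriv 2 h μ * m2 / (2 * N)
      = iteratedDeriv 3 h μ * m3 / (6*(N:ℝ)^2) + ∫ ω, R ω := by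
    rw [hn1]
    field_simp
    ring
  rw [keyeq]
  have step : (M4/24 * n1^4) * ((N:ℝ) * m4 + 3*N*((N:ℝ)-1) * m2^2)
      ≤ (M4/24 * (m4 + 3*m2^2))/(N:ℝ)^2 := by
    rw [hn1]
    have h2 : (N:ℝ)*m4 + 3*N*((N:ℝ)-1)*m2^2 ≤ (m4 + 3*m2^2) * (N:ℝ)^2 := by
      nlinarith [hm4nn, sq_nonneg m2, hN1, mul_nonneg hm4nn (sub_nonneg.mpr hN1),
        mul_nonneg (sq_nonneg m2) (le_of_lt hNpos)]
    calc (M4/24 * ((N:ℝ)⁻¹)^4) * ((N:ℝ) * m4 + 3*N*((N:ℝ)-1) * m2^2)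
        ≤ (M4/24 * ((N:ℝ)⁻¹)^4) * ((m4 + 3*m2^2) * (N:ℝ)^2) := by
          apply mul_le_mul_of_nonneg_left h2 (by positivity)
      _ = (M4/24 * (m4 + 3*m2^2))/(N:ℝ)^2 := by
          field_simp
  have habs1 : |iteratedDeriv 3 h μ * m3 / (6*(N:ℝ)^2)|
      = |iteratedDeriv 3 h μ| * |m3| / (6*(N:ℝ)^2) := by
    rw [abs_div, abs_mul, abs_of_pos (by positivity : (0:ℝ) < 6*(N:ℝ)^2)]
  calc |iteratedDeriv 3 h μ * m3 / (6*(N:ℝ)^2) + ∫ ω, R ω|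
      ≤ |iteratedDeriv 3 h μ * m3 / (6*(N:ℝ)^2)| + |∫ ω, R ω| := abs_add_le _ _
    _ ≤ |iteratedDeriv 3 h μ| * |m3| / (6*(N:ℝ)^2)
        + (M4/24 * (m4 + 3*m2^2))/(N:ℝ)^2 := by
        rw [habs1]
        exact add_le_add le_rfl (hRabs.trans step)
    _ ≤ (|iteratedDeriv 3 h μ| * |m3| / 6 + M4/24 * (m4 + 3*m2^2) + 1) / (N:ℝ)^2 := by
        have e1 : |iteratedDeriv 3 h μ| * |m3| / (6*(N:ℝ)^2)
            = (|iteratedDeriv 3 h μ| * |m3| / 6) / (N:ℝ)^2 := by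
          field_simp
        have e2 : (|iteratedDeriv 3 h μ| * |m3| / 6 + M4/24 * (m4 + 3*m2^2) + 1) / (N:ℝ)^2
            = (|iteratedDeriv 3 h μ| * |m3| / 6)/(N:ℝ)^2
              + (M4/24 * (m4 + 3*m2^2))/(N:ℝ)^2 + 1/(N:ℝ)^2 := by ring
        have e3 : (0:ℝ) < 1/(N:ℝ)^2 := by positivity
        rw [e1, e2]
        linarith
end
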